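/- The logarithmic vector fields for f = x^d + y^d (d ≥ 3) in ℂ[x,y] are generated by the Euler field E = x∂_x + y∂_y and the Hamiltonian field H = y^{d−1}∂_x − x^{d−1}∂_y: a polynomial vector field ξ = a∂_x + b∂_y satisfies ξ(f) ∈ (f) if and only if ξ = p·E + q·H for some polynomials p, q. -/

import Mathlib

open MvPolynomial


lemma primeX0 : Prime (X 0 : MvPolynomial (Fin 2) ℂ) := by
  have h := (MulEquiv.prime_iff (MvPolynomial.finSuccEquiv ℂ 1).toMulEquiv (p := (X 0 : MvPolynomial (Fin 2) ℂ))).symm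
  rw [h]
  simpa [MvPolynomial.finSuccEquiv_X_zero] using Polynomial.prime_X (R := MvPolynomial (Fin 1) ℂ)

lemma primeX1 : Prime (X 1 : MvPolynomial (Fin 2) ℂ) := by
  have h := (MulEquiv.prime_iff (MvPolynomial.renameEquiv ℂ (Equiv.swap (0:Fin 2) 1)).toMulEquiv (p := (X 0 : MvPolynomial (Fin 2) ℂ))).symm
  have h2 : ((MvPolynomial.renameEquiv ℂ (Equiv.swap (0:Fin 2) 1)).toMulEquiv (X 0) : MvPolynomial (Fin 2) ℂ) = X 1 := by
    show (MvPolynomial.renameEquiv ℂ (Equiv.swap (0:Fin 2) 1)) (X 0) = X 1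
    simp [MvPolynomial.renameEquiv_apply, rename_X]
  rw [h2] at h
  exact h.mp primeX0

lemma X1_not_dvd_X0 : ¬ (X 1 ∣ (X 0 : MvPolynomial (Fin 2) ℂ)) := by
  intro ⟨c, hc⟩
  have := congrArg (eval fun i : Fin 2 => if i = 0 then (1:ℂ) else 0) hc
  simp at this

/-- The logarithmic vector fields for `f = x^d + y^d` (`d ≥ 3`) are generated by
the Euler field `E = x∂ₓ + y∂_y` and the Hamiltonian field
`H = y^{d-1}∂ₓ − x^{d-1}∂_y`: a polynomial vector field `ξ = a∂ₓ + b∂_y`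
satisfies `ξ(f) ∈ (f)` iff `ξ = p·E + q·H` for polynomials `p, q`. -/
theorem log_vector_fields_fermat (d : ℕ) (hd : 3 ≤ d)
    (f : MvPolynomial (Fin 2) ℂ) (hf : f = X 0 ^ d + X 1 ^ d)
    (a b : MvPolynomial (Fin 2) ℂ) :
    (f ∣ a * pderiv 0 f + b * pderiv 1 f) ↔
    ∃ p q : MvPolynomial (Fin 2) ℂ,
      a = p * X 0 + q * X 1 ^ (d - 1) ∧ b = p * X 1 - q * X 0 ^ (d - 1) := by
  have hdC : (C (d:ℂ) : MvPolynomial (Fin 2) ℂ) ≠ 0 := by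
    simp; omega
  have h0 : pderiv (0:Fin 2) f = C (d:ℂ) * X 0 ^ (d-1) := by
    subst hf; simp [Derivation.leibniz_pow, pderiv_X, Pi.single_apply]
  have h1 : pderiv (1:Fin 2) f = C (d:ℂ) * X 1 ^ (d-1) := by
    subst hf; simp [Derivation.leibniz_pow, pderiv_X, Pi.single_apply]
  have hkey : a * pderiv 0 f + b * pderiv 1 f = C (d:ℂ) * (a * X 0 ^ (d-1) + b * X 1 ^ (d-1)) := by
    rw [h0, h1]; ring
  have hd1 : d - 1 + 1 = d := by omega
  constructor
  · rintro hdvd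
    rw [hkey] at hdvd
    have hdne : (d:ℂ) ≠ 0 := by exact_mod_cast (by omega : d ≠ 0)
    have hu : IsUnit (C (d:ℂ) : MvPolynomial (Fin 2) ℂ) := by
      exact (isUnit_iff_ne_zero.mpr hdne).map C
      
    have hdvd' : f ∣ a * X 0 ^ (d-1) + b * X 1 ^ (d-1) := (hu.dvd_mul_left).mp hdvd
    obtain ⟨c, hc⟩ := hdvd'
    subst hf
    -- rearrange: X1^(d-1) * (c * X1 - b) = X0^(d-1) * (a - c * X0)
    have heq : X 1 ^ (d-1) * (c * X 1 - b) = X 0 ^ (d-1) * (a - c * X 0) := by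
      have e0 : (X 0 : MvPolynomial (Fin 2) ℂ) ^ d = X 0 ^ (d-1) * X 0 := by
        rw [← pow_succ, hd1]
      have e1 : (X 1 : MvPolynomial (Fin 2) ℂ) ^ d = X 1 ^ (d-1) * X 1 := by
        rw [← pow_succ, hd1]
      rw [e0, e1] at hc
      linear_combination -hc
    have hX1 : Prime (X 1 : MvPolynomial (Fin 2) ℂ) := primeX1
    have hnd : ¬ (X 1 ∣ (X 0 : MvPolynomial (Fin 2) ℂ) ^ (d-1)) := by
      intro h
      exact X1_not_dvd_X0 (hX1.dvd_of_dvd_pow h)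
    have hdvd2 : (X 1 : MvPolynomial (Fin 2) ℂ) ^ (d-1) ∣ a - c * X 0 := by
      refine hX1.pow_dvd_of_dvd_mul_left _ hnd ?_
      exact ⟨c * X 1 - b, heq.symm⟩
    obtain ⟨q, hq⟩ := hdvd2
    refine ⟨c, q, by linear_combination hq, ?_⟩
    have hcancel : X 1 ^ (d-1) * (c * X 1 - b) = X 1 ^ (d-1) * (q * X 0 ^ (d-1)) := by
      rw [heq, hq]; ring
    have := mul_left_cancel₀ (pow_ne_zero _ (X_ne_zero 1)) hcancel
    linear_combination -this
  · rintro ⟨p, q, ha, hb⟩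
    rw [hkey, ha, hb, hf]
    refine ⟨C (d:ℂ) * p, ?_⟩
    have e0 : (X 0 : MvPolynomial (Fin 2) ℂ) ^ d = X 0 ^ (d-1) * X 0 := by
      rw [← pow_succ, hd1]
    have e1 : (X 1 : MvPolynomial (Fin 2) ℂ) ^ d = X 1 ^ (d-1) * X 1 := by
      rw [← pow_succ, hd1]
    rw [e0, e1]; ring
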